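/- For every formal power series F ∈ ℚ[[p_1,p_2,…]], every integer d ≥ 1, and every partition α of d, the coefficient of the monomial p_α = ∏_{i} p_{α_i} in F equals the coefficient of the monomial q_α = ∏_{i} q_{α_i} in (1−η)·Φ(F)·(1−γ)^{−(2d+1)}, where (1−γ)^{−1} is the multiplicative inverse of the unit 1−γ in ℚ[[q_1,q_2,…]]. -/

import Mathlib

open scoped BigOperators

/-- The number of monotone transitive factorizations of a permutation of cycle type
`parts` (a partition, given as a multiset of parts) into
`r = 2g - 2 + ℓ + d` transpositions, i.e. the monotone single Hurwitz number. -/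
noncomputable def monoH (g : ℕ) (parts : Multiset ℕ) : ℕ :=
  Nat.card {T : Equiv.Perm (Fin parts.sum) ×
      (Fin (2 * g + Multiset.card parts + parts.sum - 2) → Equiv.Perm (Fin parts.sum)) //
    T.1.cycleType = parts.filter (fun x => 2 ≤ x) ∧
    (∀ i, (T.2 i).IsSwap) ∧
    T.1 * (List.ofFn T.2).prod = 1 ∧
    (∀ x y, ∃ π ∈ Subgroup.closure ({T.1} ∪ Set.range T.2), π x = y) ∧
    ∃ a b : Fin (2 * g + Multiset.card parts + parts.sum - 2) → Fin parts.sum,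
      (∀ i, a i < b i ∧ T.2 i = Equiv.swap (a i) (b i)) ∧ Monotone b}

/-- `|Aut α| = ∏ₖ mₖ!` where `mₖ` is the number of parts equal to `k`. -/
noncomputable def autQ (s : Multiset ℕ) : ℚ :=
  (s.dedup.map fun k => (Nat.factorial (s.count k) : ℚ)).prod

/-- Rising factorial `a (a+1) ⋯ (a+k-1)`. -/
noncomputable def riseN (a : ℚ) (k : ℕ) : ℚ := ∏ i ∈ Finset.range k, (a + i)

/-- Rising factorial with integer exponent, with the convention
`a^{↑k} = 1/((a+k)^{↑(-k)})` for `k < 0`. -/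
noncomputable def riseZ (a : ℚ) (k : ℤ) : ℚ :=
  if 0 ≤ k then ∏ i ∈ Finset.range k.toNat, (a + i)
  else 1 / ∏ i ∈ Finset.range (-k).toNat, (a + (k : ℚ) + i)

/-- The genus `g` generating function `H⃗_g = ∑_{d ≥ 1} ∑_{α ⊢ d} H⃗_g(α) p_α / d!`, as a formal
power series in variables indexed by `ℕ` (the variable of index `j ≥ 1` is `p_j`; index `0` is
unused). The coefficient of the monomial `p_α` is `H⃗_g(α)/d!`. -/
noncomputable def Hgen (g : ℕ) : MvPowerSeries ℕ ℚ := fun m =>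
  if m 0 = 0 ∧ m ≠ 0 then
    (monoH g (Finsupp.toMultiset m) : ℚ) / (Nat.factorial (Finsupp.toMultiset m).sum : ℚ)
  else 0

/-- The series `∑_{k ≥ 1} c k · q_k`, linear in the variables. -/
noncomputable def linS (c : ℕ → ℚ) : MvPowerSeries ℕ ℚ := fun m =>
  ∑ k ∈ m.support, if m = Finsupp.single k 1 then c k else 0

/-- `γ = ∑_{k ≥ 1} C(2k,k) q_k`. -/
noncomputable def gammaS : MvPowerSeries ℕ ℚ :=
  linS fun k => if k = 0 then 0 else (Nat.choose (2 * k) k : ℚ)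

/-- `η = ∑_{k ≥ 1} (2k+1) C(2k,k) q_k`. -/
noncomputable def etaS : MvPowerSeries ℕ ℚ :=
  linS fun k => if k = 0 then 0 else ((2 * k + 1) * Nat.choose (2 * k) k : ℚ)

/-- `η_j = ∑_{k ≥ 1} (2k+1) k^j C(2k,k) q_k`. -/
noncomputable def etaJ (j : ℕ) : MvPowerSeries ℕ ℚ :=
  linS fun k => if k = 0 then 0 else ((2 * k + 1) * k ^ j * Nat.choose (2 * k) k : ℚ)

/-- The substitution sending the variable of index `j` to `q_j (1-γ)^{2 w j}`; the coefficient
of a monomial `μ` in the image is a (finite) sum over the monomials `m ≤ μ` of the source. -/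
noncomputable def subW (w : ℕ → ℕ) (F : MvPowerSeries ℕ ℚ) : MvPowerSeries ℕ ℚ := fun μ =>
  ∑ m ∈ Finset.Iic μ, (MvPowerSeries.coeff m F) *
    MvPowerSeries.coeff μ
      (MvPowerSeries.monomial m 1 * (1 - gammaS) ^ (2 * m.sum fun j n => w j * n))

/-- The substitution homomorphism `Φ` sending `p_j ↦ q_j (1-γ)^{2j}` for `j ≥ 1`. -/
noncomputable def Phi : MvPowerSeries ℕ ℚ → MvPowerSeries ℕ ℚ := subW id

/-- The substitution homomorphism `Φ'` sending `p_j ↦ q_j (1-γ)^{2j}` for `j ≥ 1` and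
`x_1 ↦ y_1 (1-γ)^2`, where `x_1` (resp. `y_1`) is the variable of index `0` of the source
(resp. target). -/
noncomputable def Phi' : MvPowerSeries ℕ ℚ → MvPowerSeries ℕ ℚ := subW (fun j => max j 1)

/-- Substitution of a series with zero constant term into `L(X) = ∑_{k ≥ 1} X^k / k
= log (1/(1-X))`. -/
noncomputable def Lsub (a : MvPowerSeries ℕ ℚ) : MvPowerSeries ℕ ℚ := fun μ =>
  ∑ k ∈ Finset.Icc 1 (μ.sum fun _ n => n), (1 / (k : ℚ)) * MvPowerSeries.coeff μ (a ^ k)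

/-- The operator `Δ₁ F = ∑_{k ≥ 1} k x₁^k ∂F/∂p_k`, where `x₁` is the variable of index `0`
and `p_k` the variable of index `k ≥ 1`. -/
noncomputable def Del (F : MvPowerSeries ℕ ℚ) : MvPowerSeries ℕ ℚ := fun μ =>
  ∑ k ∈ Finset.Icc 1 (μ 0),
    (k : ℚ) * ((μ k : ℚ) + 1) *
      MvPowerSeries.coeff (μ - Finsupp.single 0 k + Finsupp.single k 1) F

/-- `σ(y₁) = ∑_{k ≥ 0} C(2k,k) y₁^k`, a series in the single variable `y₁` of index `0`. -/
noncomputable def sigmaS : MvPowerSeries ℕ ℚ := fun μ =>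
  if μ.support ⊆ {0} then (Nat.choose (2 * μ 0) (μ 0) : ℚ) else 0


section Aux

open MvPowerSeries Finsupp

/-- coefficient in γ -/
noncomputable def cg (k : ℕ) : ℚ := if k = 0 then 0 else (Nat.choose (2 * k) k : ℚ)

/-- total degree of a monomial -/
def degF (ν : ℕ →₀ ℕ) : ℕ := ν.sum fun _ n => n

/-- weight of a monomial -/
def wtF (ν : ℕ →₀ ℕ) : ℕ := ν.sum fun j n => j * n

/-- `∏ c_k^{ν_k}/ν_k!` -/
noncomputable def Pf (ν : ℕ →₀ ℕ) : ℚ := ν.prod fun k n => cg k ^ n / (Nat.factorial n : ℚ)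

/-- explicit series for `(1-γ)^{-(r+1)}` -/
noncomputable def Jser (r : ℕ) : MvPowerSeries ℕ ℚ := fun ν =>
  (Nat.choose (r + degF ν) (degF ν) : ℚ) * (Nat.factorial (degF ν) : ℚ) * Pf ν

lemma gammaS_eq : gammaS = linS cg := rfl

lemma coeff_apply' (f : MvPowerSeries ℕ ℚ) (d : ℕ →₀ ℕ) : MvPowerSeries.coeff d f = f d := rfl

lemma linS_single (c : ℕ → ℚ) (k : ℕ) : linS c (Finsupp.single k 1) = c k := by
  unfold linS
  rw [Finsupp.support_single_ne_zero k one_ne_zero]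
  simp

lemma linS_ne (c : ℕ → ℚ) (m : ℕ →₀ ℕ) (h : ∀ k, m ≠ Finsupp.single k 1) :
    linS c m = 0 := by
  unfold linS
  exact Finset.sum_eq_zero fun k _ => if_neg (h k)

lemma degF_add (a b : ℕ →₀ ℕ) : degF (a + b) = degF a + degF b := by
  unfold degF
  exact Finsupp.sum_add_index' (fun _ => rfl) (fun _ _ _ => rfl)

lemma wtF_add (a b : ℕ →₀ ℕ) : wtF (a + b) = wtF a + wtF b := by
  unfold wtF
  exact Finsupp.sum_add_index' (fun a => by simp) (fun a m n => Nat.mul_add a m n)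

lemma degF_single (k : ℕ) : degF (Finsupp.single k 1) = 1 := by
  unfold degF; rw [Finsupp.sum_single_index rfl]

lemma wtF_single (k : ℕ) : wtF (Finsupp.single k 1) = k := by
  unfold wtF; rw [Finsupp.sum_single_index (by simp)]; simp

lemma degF_zero : degF 0 = 0 := rfl

lemma Pf_zero : Pf 0 = 1 := rfl

lemma degF_eq_zero {ν : ℕ →₀ ℕ} (h : degF ν = 0) : ν = 0 := by
  unfold degF Finsupp.sum at h
  rw [Finset.sum_eq_zero_iff] at h
  ext k
  by_cases hk : k ∈ ν.support
  · exact h k hk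
  · simpa using (Finsupp.notMem_support_iff.mp hk)

lemma degF_sub {ν : ℕ →₀ ℕ} {k : ℕ} (hk : ν k ≠ 0) :
    degF ν = degF (ν - Finsupp.single k 1) + 1 := by
  have hle : Finsupp.single k 1 ≤ ν := Finsupp.single_le_iff.mpr (Nat.one_le_iff_ne_zero.mpr hk)
  have h : ν - Finsupp.single k 1 + Finsupp.single k 1 = ν := tsub_add_cancel_of_le hle
  conv_lhs => rw [← h]
  rw [degF_add, degF_single]

lemma Pf_sub (ν : ℕ →₀ ℕ) (k : ℕ) (hk : ν k ≠ 0) :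
    cg k * Pf (ν - Finsupp.single k 1) = (ν k : ℚ) * Pf ν := by
  set δ : ℕ →₀ ℕ := ν - Finsupp.single k 1 with hδ
  have hsup : δ.support ⊆ ν.support := Finsupp.support_tsub
  have hP1 : Pf δ = ∏ j ∈ ν.support, cg j ^ (δ j) / (Nat.factorial (δ j) : ℚ) :=
    Finsupp.prod_of_support_subset δ hsup
      (fun j n => cg j ^ n / (Nat.factorial n : ℚ)) (fun j _ => by simp)
  have hP2 : Pf ν = ∏ j ∈ ν.support, cg j ^ (ν j) / (Nat.factorial (ν j) : ℚ) := rfl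
  have hkmem : k ∈ ν.support := Finsupp.mem_support_iff.mpr hk
  rw [hP1, hP2, ← Finset.mul_prod_erase _ _ hkmem, ← Finset.mul_prod_erase _ _ hkmem]
  have hrest : ∀ j ∈ ν.support.erase k,
      cg j ^ (δ j) / (Nat.factorial (δ j) : ℚ)
        = cg j ^ (ν j) / (Nat.factorial (ν j) : ℚ) := by
    intro j hj
    have hjk : j ≠ k := Finset.ne_of_mem_erase hj
    have : δ j = ν j := by
      rw [hδ, Finsupp.tsub_apply, Finsupp.single_eq_of_ne' (fun h => hjk h.symm), Nat.sub_zero]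
    rw [this]
  rw [Finset.prod_congr rfl hrest]
  have hνk : δ k = ν k - 1 := by
    rw [hδ, Finsupp.tsub_apply, Finsupp.single_eq_same]
  rw [hνk]
  obtain ⟨n, hn⟩ := Nat.exists_eq_succ_of_ne_zero hk
  rw [hn]
  simp only [Nat.succ_sub_one]
  have h1 : (Nat.factorial n : ℚ) ≠ 0 := Nat.cast_ne_zero.mpr (Nat.factorial_ne_zero n)
  have h2 : (Nat.factorial (n+1) : ℚ) ≠ 0 := Nat.cast_ne_zero.mpr (Nat.factorial_ne_zero _)
  rw [Nat.factorial_succ]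
  push_cast
  field_simp
  rw [Nat.succ_eq_add_one]
  ring

lemma sum_support_cast (ν : ℕ →₀ ℕ) : (∑ k ∈ ν.support, (ν k : ℚ)) = (degF ν : ℚ) := by
  unfold degF Finsupp.sum; push_cast; rfl

lemma sum_support_wt (ν : ℕ →₀ ℕ) :
    (∑ k ∈ ν.support, ((2 * k + 1 : ℕ) : ℚ) * (ν k : ℚ)) = 2 * (wtF ν : ℚ) + (degF ν : ℚ) := by
  have h1 : (wtF ν : ℚ) = ∑ k ∈ ν.support, (k : ℚ) * (ν k : ℚ) := by
    unfold wtF Finsupp.sum; push_cast; rfl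
  rw [h1, ← sum_support_cast, Finset.mul_sum, ← Finset.sum_add_distrib]
  apply Finset.sum_congr rfl
  intro k _
  push_cast
  ring

/-- coefficient of a linear series times something -/
lemma coeff_linS_mul (c : ℕ → ℚ) (A : MvPowerSeries ℕ ℚ) (ν : ℕ →₀ ℕ) :
    MvPowerSeries.coeff ν (linS c * A) =
      ∑ k ∈ ν.support, c k * MvPowerSeries.coeff (ν - Finsupp.single k 1) A := by
  rw [MvPowerSeries.coeff_mul]
  have hinj : Set.InjOn (fun k => (Finsupp.single k 1, ν - Finsupp.single k 1)) ν.support := by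
    intro a _ b _ hab
    have : Finsupp.single a 1 = Finsupp.single b 1 := congrArg Prod.fst hab
    exact Finsupp.single_left_injective one_ne_zero this
  have hsub : ν.support.image (fun k => (Finsupp.single k 1, ν - Finsupp.single k 1))
      ⊆ Finset.HasAntidiagonal.antidiagonal ν := by
    intro p hp
    rw [Finset.mem_image] at hp
    obtain ⟨k, hk, rfl⟩ := hp
    rw [Finset.HasAntidiagonal.mem_antidiagonal]
    exact add_tsub_cancel_of_le (Finsupp.single_le_iff.mpr
      (Nat.one_le_iff_ne_zero.mpr (Finsupp.mem_support_iff.mp hk)))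
  rw [← Finset.sum_subset hsub]
  · rw [Finset.sum_image hinj]
    apply Finset.sum_congr rfl
    intro k _
    rw [coeff_apply', linS_single]
  · intro p hp hnp
    rw [Finset.HasAntidiagonal.mem_antidiagonal] at hp
    by_cases hex : ∃ k, p.1 = Finsupp.single k 1
    · obtain ⟨k, hk⟩ := hex
      exfalso
      apply hnp
      have hp2 : p.2 = ν - Finsupp.single k 1 := by
        rw [← hk]
        exact eq_tsub_of_add_eq (by rw [add_comm]; exact hp)
      rw [Finset.mem_image]
      refine ⟨k, ?_, ?_⟩
      · rw [Finsupp.mem_support_iff]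
        have h5 : ν k = p.1 k + p.2 k := by rw [← hp]; rfl
        rw [hk, Finsupp.single_eq_same] at h5
        omega
      · rw [← hp2, ← hk]
    · push_neg at hex
      rw [coeff_apply', linS_ne c p.1 hex, zero_mul]

lemma constantCoeff_linS (c : ℕ → ℚ) : MvPowerSeries.constantCoeff (linS c) = 0 := by
  have : MvPowerSeries.coeff (0 : ℕ →₀ ℕ) (linS c) = 0 := by
    rw [coeff_apply']
    unfold linS
    simp
  rwa [MvPowerSeries.coeff_zero_eq_constantCoeff_apply] at this

lemma Jser_zero_coeff (r : ℕ) : MvPowerSeries.coeff (0 : ℕ →₀ ℕ) (Jser r) = 1 := by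
  rw [coeff_apply']
  unfold Jser
  rw [degF_zero, Pf_zero]
  simp

lemma Jser_const (r : ℕ) : MvPowerSeries.constantCoeff (Jser r) = 1 := by
  rw [← MvPowerSeries.coeff_zero_eq_constantCoeff_apply]; exact Jser_zero_coeff r

lemma constantCoeff_one_sub_gamma :
    MvPowerSeries.constantCoeff (1 - gammaS) = 1 := by
  rw [map_sub, map_one, gammaS_eq, constantCoeff_linS, sub_zero]

/-- Core coefficient computation for `(1 - linS c) * Jser r` at a nonzero monomial,
when `c k * Pf (ν - e k) = w k * ν k * Pf ν`. -/
lemma coeff_one_sub_linS_mul_J (c : ℕ → ℚ) (w : ℕ → ℚ) (r t : ℕ) (ν : ℕ →₀ ℕ)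
    (hdeg : degF ν = t + 1)
    (hw : ∀ k ∈ ν.support, c k * Pf (ν - Finsupp.single k 1) = w k * (ν k : ℚ) * Pf ν) :
    MvPowerSeries.coeff ν ((1 - linS c) * Jser r) =
      ((r + (t+1)).choose (t+1) : ℚ) * (Nat.factorial (t+1) : ℚ) * Pf ν -
      ((r + t).choose t : ℚ) * (Nat.factorial t : ℚ) *
        (∑ k ∈ ν.support, w k * (ν k : ℚ)) * Pf ν := by
  rw [sub_mul, one_mul, map_sub, coeff_linS_mul]
  have h1 : MvPowerSeries.coeff ν (Jser r) =
      ((r + (t+1)).choose (t+1) : ℚ) * (Nat.factorial (t+1) : ℚ) * Pf ν := by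
    rw [coeff_apply']; unfold Jser; rw [hdeg]
  rw [h1]
  congr 1
  have h2 : ∀ k ∈ ν.support,
      c k * MvPowerSeries.coeff (ν - Finsupp.single k 1) (Jser r) =
        ((r + t).choose t : ℚ) * (Nat.factorial t : ℚ) * (w k * (ν k : ℚ)) * Pf ν := by
    intro k hk
    have hνk := Finsupp.mem_support_iff.mp hk
    have hd : degF (ν - Finsupp.single k 1) = t := by
      have := degF_sub hνk; omega
    rw [coeff_apply']
    unfold Jser
    rw [hd]
    rw [show c k * (((r + t).choose t : ℚ) * (Nat.factorial t : ℚ) * Pf (ν - Finsupp.single k 1))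
        = (((r + t).choose t : ℚ) * (Nat.factorial t : ℚ)) * (c k * Pf (ν - Finsupp.single k 1))
      from by ring, hw k hk]
    ring
  rw [Finset.sum_congr rfl h2, ← Finset.sum_mul, ← Finset.mul_sum]

lemma one_sub_gamma_mul_J (r : ℕ) : (1 - gammaS) * Jser (r + 1) = Jser r := by
  apply MvPowerSeries.ext
  intro ν
  by_cases hν : ν = 0
  · subst hν
    simp only [MvPowerSeries.coeff_zero_eq_constantCoeff_apply, map_mul,
      constantCoeff_one_sub_gamma, Jser_const, one_mul]
  · have hd : degF ν ≠ 0 := fun h => hν (degF_eq_zero h)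
    obtain ⟨t, ht⟩ := Nat.exists_eq_succ_of_ne_zero hd
    rw [gammaS_eq, coeff_one_sub_linS_mul_J cg (fun _ => 1) (r+1) t ν ht
      (fun k hk => by rw [one_mul]; exact Pf_sub ν k (Finsupp.mem_support_iff.mp hk))]
    simp only [one_mul]
    rw [sum_support_cast, ht]
    have h3 : MvPowerSeries.coeff ν (Jser r) =
        ((r + (t+1)).choose (t+1) : ℚ) * (Nat.factorial (t+1) : ℚ) * Pf ν := by
      rw [coeff_apply']; unfold Jser; rw [ht]
    rw [h3]
    have hch : ((r + 1) + (t+1)).choose (t+1) = (r + t + 1).choose t + (r + (t+1)).choose (t+1) := by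
      rw [show r + 1 + (t + 1) = (r + t + 1) + 1 by omega, show r + (t + 1) = r + t + 1 by omega]
      exact Nat.choose_succ_succ (r + t + 1) t
    rw [hch]
    rw [Nat.factorial_succ]
    push_cast
    ring

lemma one_sub_gamma_mul_J0 : (1 - gammaS) * Jser 0 = 1 := by
  apply MvPowerSeries.ext
  intro ν
  by_cases hν : ν = 0
  · subst hν
    simp only [MvPowerSeries.coeff_zero_eq_constantCoeff_apply, map_mul,
      constantCoeff_one_sub_gamma, Jser_const, one_mul, map_one]
  · have hd : degF ν ≠ 0 := fun h => hν (degF_eq_zero h)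
    obtain ⟨t, ht⟩ := Nat.exists_eq_succ_of_ne_zero hd
    rw [gammaS_eq, coeff_one_sub_linS_mul_J cg (fun _ => 1) 0 t ν ht
      (fun k hk => by rw [one_mul]; exact Pf_sub ν k (Finsupp.mem_support_iff.mp hk))]
    simp only [one_mul]
    rw [sum_support_cast, ht, MvPowerSeries.coeff_one, if_neg hν]
    simp only [Nat.zero_add]
    rw [Nat.choose_self, Nat.choose_self, Nat.factorial_succ]
    push_cast
    ring

lemma pow_one_sub_gamma_mul_J (r : ℕ) : (1 - gammaS) ^ (r + 1) * Jser r = 1 := by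
  induction r with
  | zero => rw [pow_one]; exact one_sub_gamma_mul_J0
  | succ n ih =>
    have : (1 - gammaS) ^ (n + 2) * Jser (n + 1) =
        (1 - gammaS) ^ (n + 1) * ((1 - gammaS) * Jser (n + 1)) := by ring
    rw [this, one_sub_gamma_mul_J, ih]

lemma one_sub_gamma_mul_inv : (1 - gammaS) * (1 - gammaS)⁻¹ = 1 :=
  MvPowerSeries.mul_inv_cancel _ (by rw [constantCoeff_one_sub_gamma]; exact one_ne_zero)

lemma inv_pow_eq_Jser (r : ℕ) : ((1 - gammaS)⁻¹) ^ (r + 1) = Jser r := by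
  calc ((1 - gammaS)⁻¹) ^ (r + 1)
      = ((1 - gammaS) ^ (r+1) * Jser r) * ((1 - gammaS)⁻¹) ^ (r + 1) := by
        rw [pow_one_sub_gamma_mul_J, one_mul]
    _ = Jser r * ((1 - gammaS) * (1 - gammaS)⁻¹) ^ (r + 1) := by rw [mul_pow]; ring
    _ = Jser r := by rw [one_sub_gamma_mul_inv, one_pow, mul_one]

lemma etaS_eq : etaS = linS (fun k => ((2 * k + 1 : ℕ) : ℚ) * cg k) := by
  unfold etaS
  have h : (fun k : ℕ => if k = 0 then (0:ℚ) else ((2 * k + 1) * Nat.choose (2 * k) k : ℚ))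
      = fun k : ℕ => ((2 * k + 1 : ℕ) : ℚ) * cg k := by
    funext k
    by_cases hk : k = 0
    · subst hk; simp [cg]
    · rw [if_neg hk]; unfold cg; rw [if_neg hk]; push_cast; ring
  rw [h]

/-- the key vanishing lemma -/
lemma eta_vanish {ν : ℕ →₀ ℕ} (hν : ν ≠ 0) {s : ℕ} (hs : wtF ν = s) :
    MvPowerSeries.coeff ν ((1 - etaS) * Jser (2 * s)) = 0 := by
  have hd : degF ν ≠ 0 := fun h => hν (degF_eq_zero h)
  obtain ⟨t, ht⟩ := Nat.exists_eq_succ_of_ne_zero hd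
  rw [etaS_eq, coeff_one_sub_linS_mul_J _ (fun k => ((2 * k + 1 : ℕ) : ℚ)) (2*s) t ν ht
    (fun k hk => by
      rw [mul_assoc, Pf_sub ν k (Finsupp.mem_support_iff.mp hk)]; ring)]
  rw [sum_support_wt, hs, ht]
  have key : ((2*s + (t+1)).choose (t+1)) * Nat.factorial (t+1) =
      ((2*s + t).choose t) * Nat.factorial t * (2 * s + (t + 1)) := by
    have h1 := Nat.choose_mul_factorial_mul_factorial (show t+1 ≤ 2*s + (t+1) by omega)
    have h2 := Nat.choose_mul_factorial_mul_factorial (show t ≤ 2*s + t by omega)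
    have e1 : 2*s + (t+1) - (t+1) = 2*s := by omega
    have e2 : 2*s + t - t = 2*s := by omega
    rw [e1] at h1
    rw [e2] at h2
    have h3 : (2*s + (t+1)).factorial = (2*s+(t+1)) * (2*s+t).factorial := by
      have : 2*s + (t+1) = (2*s+t) + 1 := by omega
      rw [this, Nat.factorial_succ]
    apply Nat.eq_of_mul_eq_mul_right (Nat.factorial_pos (2*s))
    rw [h1, h3, ← h2]
    ring
  have keyQ : (((2*s + (t+1)).choose (t+1) : ℚ)) * (Nat.factorial (t+1) : ℚ) =
      ((2*s + t).choose t : ℚ) * (Nat.factorial t : ℚ) * (2 * (s:ℚ) + ((t:ℚ) + 1)) := by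
    have := congrArg (fun n : ℕ => (n : ℚ)) key
    push_cast at this
    push_cast
    linarith
  rw [keyQ]
  push_cast
  ring

lemma wt_le_of_le {m μ : ℕ →₀ ℕ} (h : m ≤ μ) : wtF m ≤ wtF μ := by
  have : m + (μ - m) = μ := add_tsub_cancel_of_le h
  have h2 := wtF_add m (μ - m)
  rw [this] at h2
  omega

lemma wtF_toFinsupp (s : Multiset ℕ) : wtF (Multiset.toFinsupp s) = s.sum := by
  induction s using Multiset.induction_on with
  | empty => simp [wtF]
  | cons a s ih =>
    rw [← Multiset.singleton_add, Multiset.toFinsupp_add, wtF_add, Multiset.toFinsupp_singleton,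
      wtF_single, Multiset.sum_add, ih, Multiset.sum_singleton]

end Aux


/-- Lagrange inversion: extraction of the coefficient of `p_α` via the coefficient of `q_α`. -/
theorem coeff_p_eq_coeff_q (F : MvPowerSeries ℕ ℚ) (d : ℕ) (hd : 1 ≤ d)
    (α : Nat.Partition d) :
    MvPowerSeries.coeff (Multiset.toFinsupp α.parts) F =
      MvPowerSeries.coeff (Multiset.toFinsupp α.parts)
        ((1 - etaS) * Phi F * ((1 - gammaS)⁻¹) ^ (2 * d + 1)) := by
  classical
  set μ : ℕ →₀ ℕ := Multiset.toFinsupp α.parts with hμ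
  have hwt : wtF μ = d := by rw [hμ, wtF_toFinsupp, α.parts_sum]
  set G : MvPowerSeries ℕ ℚ := (1 - etaS) * ((1 - gammaS)⁻¹) ^ (2 * d + 1) with hG
  have hrearr : (1 - etaS) * Phi F * ((1 - gammaS)⁻¹) ^ (2 * d + 1) = Phi F * G := by
    rw [hG]; ring
  have hPhi : ∀ x : ℕ →₀ ℕ, MvPowerSeries.coeff x (Phi F) =
      ∑ m ∈ Finset.Iic x, MvPowerSeries.coeff m F *
        MvPowerSeries.coeff x
          (MvPowerSeries.monomial m 1 * (1 - gammaS) ^ (2 * wtF m)) := fun _ => rfl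
  have hstep : ∀ p ∈ Finset.HasAntidiagonal.antidiagonal μ,
      MvPowerSeries.coeff p.1 (Phi F) * MvPowerSeries.coeff p.2 G =
        ∑ m ∈ Finset.Iic μ, MvPowerSeries.coeff m F *
          (MvPowerSeries.coeff p.1
              (MvPowerSeries.monomial m 1 * (1 - gammaS) ^ (2 * wtF m)) *
            MvPowerSeries.coeff p.2 G) := by
    intro p hp
    rw [Finset.HasAntidiagonal.mem_antidiagonal] at hp
    have hle : p.1 ≤ μ := by rw [← hp]; exact le_self_add
    rw [hPhi p.1,
      Finset.sum_subset (Finset.Iic_subset_Iic.mpr hle) (fun m _ hm => by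
        rw [MvPowerSeries.coeff_monomial_mul, if_neg (fun hc => hm (Finset.mem_Iic.mpr hc)),
          mul_zero]),
      Finset.sum_mul]
    exact Finset.sum_congr rfl fun m _ => mul_assoc _ _ _
  have hterm : ∀ m ∈ Finset.Iic μ,
      MvPowerSeries.coeff μ
          ((MvPowerSeries.monomial m 1 * (1 - gammaS) ^ (2 * wtF m)) * G) =
        if m = μ then 1 else 0 := by
    intro m hm
    rw [Finset.mem_Iic] at hm
    have hwm : wtF m ≤ d := hwt ▸ wt_le_of_le hm
    have hpow : (1 - gammaS) ^ (2 * wtF m) * G = (1 - etaS) * Jser (2 * (d - wtF m)) := by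
      rw [hG]
      have h1 : ((1 - gammaS)⁻¹) ^ (2 * d + 1) =
          ((1 - gammaS)⁻¹) ^ (2 * wtF m) * ((1 - gammaS)⁻¹) ^ (2 * (d - wtF m) + 1) := by
        rw [← pow_add]; congr 1; omega
      have h2 : (1 - gammaS) ^ (2 * wtF m) * ((1 - gammaS)⁻¹) ^ (2 * wtF m) = 1 := by
        rw [← mul_pow, one_sub_gamma_mul_inv, one_pow]
      calc (1 - gammaS) ^ (2 * wtF m) *
            ((1 - etaS) * ((1 - gammaS)⁻¹) ^ (2 * d + 1))
          = ((1 - gammaS) ^ (2 * wtF m) * ((1 - gammaS)⁻¹) ^ (2 * wtF m)) *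
              ((1 - etaS) * ((1 - gammaS)⁻¹) ^ (2 * (d - wtF m) + 1)) := by
            rw [h1]; ring
        _ = (1 - etaS) * ((1 - gammaS)⁻¹) ^ (2 * (d - wtF m) + 1) := by rw [h2, one_mul]
        _ = (1 - etaS) * Jser (2 * (d - wtF m)) := by rw [inv_pow_eq_Jser]
    rw [mul_assoc, hpow, MvPowerSeries.coeff_monomial_mul, if_pos hm, one_mul]
    by_cases hmμ : m = μ
    · subst hmμ
      rw [if_pos rfl, tsub_self, MvPowerSeries.coeff_zero_eq_constantCoeff_apply, map_mul,
        map_sub, map_one, etaS_eq, constantCoeff_linS, sub_zero, one_mul, Jser_const]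
    · have hne : μ - m ≠ 0 := fun h => hmμ (le_antisymm hm (tsub_eq_zero_iff_le.mp h))
      have hwts : wtF (μ - m) = d - wtF m := by
        have h3 : m + (μ - m) = μ := add_tsub_cancel_of_le hm
        have h4 := wtF_add m (μ - m)
        rw [h3, hwt] at h4
        omega
      rw [eta_vanish hne hwts, if_neg hmμ]
  have hfin : ∀ m ∈ Finset.Iic μ,
      (∑ p ∈ Finset.HasAntidiagonal.antidiagonal μ, MvPowerSeries.coeff m F *
        (MvPowerSeries.coeff p.1
            (MvPowerSeries.monomial m 1 * (1 - gammaS) ^ (2 * wtF m)) *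
          MvPowerSeries.coeff p.2 G)) =
        MvPowerSeries.coeff m F * (if m = μ then 1 else 0) := by
    intro m hm
    rw [← Finset.mul_sum, ← MvPowerSeries.coeff_mul, hterm m hm]
  rw [hrearr, MvPowerSeries.coeff_mul, Finset.sum_congr rfl hstep, Finset.sum_comm,
    Finset.sum_congr rfl hfin,
    Finset.sum_eq_single_of_mem μ (Finset.mem_Iic.mpr le_rfl)
      (fun b _ hb => by rw [if_neg hb, mul_zero]),
    if_pos rfl, mul_one]
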